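/- Let X and Y be independent random variables with Weibull densities f(x;α_S,β,γ) and f(y;α_A,β,γ) respectively, sharing the same location β and shape γ > 0. Then P(X > Y) = α_S^γ / (α_S^γ + α_A^γ). -/

import Mathlib

open MeasureTheory ProbabilityTheory Real

noncomputable def weibullPDF (α β γ x : ℝ) : ℝ :=
  if β ≤ x then (γ / α) * ((x - β) / α) ^ (γ - 1) * Real.exp (-((x - β) / α) ^ γ) else 0

open Set Filter

lemma aux_hasDerivAt (c γ β : ℝ) (hγ : 0 < γ) {x : ℝ} (hx : β < x) :
    HasDerivAt (fun t => -Real.exp (-(c * (t - β) ^ γ)))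
      (c * γ * (x - β) ^ (γ - 1) * Real.exp (-(c * (x - β) ^ γ))) x := by
  have h1 : HasDerivAt (fun t : ℝ => t - β) 1 x := (hasDerivAt_id x).sub_const β
  have h2 : HasDerivAt (fun t : ℝ => (t - β) ^ γ) (γ * (x - β) ^ (γ - 1)) x := by
    have := (Real.hasDerivAt_rpow_const (x := x - β) (p := γ) (Or.inl (by linarith))).comp x h1
    rw [mul_one] at this
    exact this
  have h3 : HasDerivAt (fun t : ℝ => -(c * (t - β) ^ γ)) (-(c * (γ * (x - β) ^ (γ - 1)))) x :=
    ((h2.const_mul c).neg)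
  have h4 := (Real.hasDerivAt_exp (-(c * (x - β) ^ γ))).comp x h3
  have h5 : HasDerivAt (fun t => -Real.exp (-(c * (t - β) ^ γ)))
      (-(Real.exp (-(c * (x - β) ^ γ)) * -(c * (γ * (x - β) ^ (γ - 1))))) x := h4.neg
  convert h5 using 1
  ring

lemma aux_tendsto (c γ β : ℝ) (hc : 0 < c) (hγ : 0 < γ) :
    Tendsto (fun t => -Real.exp (-(c * (t - β) ^ γ))) atTop (nhds 0) := by
  have h1 : Tendsto (fun t : ℝ => t - β) atTop atTop := tendsto_atTop_add_const_right _ _ tendsto_id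
  have h2 : Tendsto (fun t : ℝ => (t - β) ^ γ) atTop atTop :=
    (tendsto_rpow_atTop hγ).comp h1
  have h3 : Tendsto (fun t : ℝ => -(c * (t - β) ^ γ)) atTop atBot :=
    tendsto_neg_atTop_atBot.comp (h2.const_mul_atTop hc)
  have := (Real.tendsto_exp_atBot).comp h3
  simpa using this.neg

lemma aux_cont (c γ β : ℝ) (hγ : 0 < γ) :
    ContinuousWithinAt (fun t => -Real.exp (-(c * (t - β) ^ γ))) (Ici β) β := by
  apply ContinuousWithinAt.neg
  apply (Real.continuous_exp.continuousWithinAt).comp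
  · apply ContinuousWithinAt.neg
    apply ContinuousWithinAt.mul continuousWithinAt_const
    apply ContinuousWithinAt.rpow_const
    · exact (continuous_id.sub continuous_const).continuousWithinAt
    · exact Or.inr hγ.le
  · exact mapsTo_univ _ _

lemma key_integral (c γ β : ℝ) (hc : 0 < c) (hγ : 0 < γ) :
    ∫ x in Ioi β, c * γ * (x - β) ^ (γ - 1) * Real.exp (-(c * (x - β) ^ γ)) = 1 := by
  have h := integral_Ioi_of_hasDerivAt_of_nonneg (aux_cont c γ β hγ)
    (fun x hx => aux_hasDerivAt c γ β hγ hx) (fun x hx => by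
      have h0 : (0:ℝ) ≤ (x - β) ^ (γ - 1) := Real.rpow_nonneg (by simpa using hx.out.le) _
      positivity)
    (aux_tendsto c γ β hc hγ)
  rw [h]
  simp [Real.zero_rpow hγ.ne']

lemma key_integrable (c γ β : ℝ) (hc : 0 < c) (hγ : 0 < γ) :
    IntegrableOn (fun x => c * γ * (x - β) ^ (γ - 1) * Real.exp (-(c * (x - β) ^ γ))) (Ioi β) :=
  integrableOn_Ioi_deriv_of_nonneg (aux_cont c γ β hγ)
    (fun x hx => aux_hasDerivAt c γ β hγ hx) (fun x hx => by
      have h0 : (0:ℝ) ≤ (x - β) ^ (γ - 1) := Real.rpow_nonneg (by simpa using hx.out.le) _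
      positivity)
    (aux_tendsto c γ β hc hγ)

lemma weib_point (α β γ b x : ℝ) (hα : 0 < α) (hγ : 0 < γ) (hb : 0 ≤ b) (hx : β < x) :
    weibullPDF α β γ x * Real.exp (-(b * (x - β) ^ γ)) =
    (α ^ (-γ) / (α ^ (-γ) + b)) *
      ((α ^ (-γ) + b) * γ * (x - β) ^ (γ - 1) *
        Real.exp (-((α ^ (-γ) + b) * (x - β) ^ γ))) := by
  have hu : (0:ℝ) < x - β := by linarith
  have hA : (0:ℝ) < α ^ γ := Real.rpow_pos_of_pos hα γ
  have hA1 : (0:ℝ) < α ^ (γ - 1) := Real.rpow_pos_of_pos hα _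
  have hApow : α ^ (γ - 1) * α = α ^ γ := by
    rw [← Real.rpow_add_one hα.ne']; ring_nf
  rw [weibullPDF, if_pos hx.le, Real.div_rpow hu.le hα.le, Real.div_rpow hu.le hα.le,
    Real.rpow_neg hα.le]
  rw [mul_assoc, ← Real.exp_add]
  have hexp : -((x - β) ^ γ / α ^ γ) + -(b * (x - β) ^ γ)
      = -(((α ^ γ)⁻¹ + b) * (x - β) ^ γ) := by field_simp; ring
  rw [hexp]
  have hab : (0:ℝ) < (α ^ γ)⁻¹ + b := by positivity
  field_simp
  rw [mul_comm α (α ^ (γ - 1)), hApow]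

lemma weib_exp_integral (α β γ b : ℝ) (hα : 0 < α) (hγ : 0 < γ) (hb : 0 ≤ b) :
    ∫ x in Ioi β, weibullPDF α β γ x * Real.exp (-(b * (x - β) ^ γ))
      = α ^ (-γ) / (α ^ (-γ) + b) := by
  have hab : (0:ℝ) < α ^ (-γ) + b := by
    have := Real.rpow_pos_of_pos hα (-γ); linarith
  rw [setIntegral_congr_fun measurableSet_Ioi
    (fun x hx => weib_point α β γ b x hα hγ hb hx)]
  rw [integral_const_mul, key_integral _ γ β hab hγ, mul_one]

lemma weib_exp_integrableOn (α β γ b : ℝ) (hα : 0 < α) (hγ : 0 < γ) (hb : 0 ≤ b) :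
    IntegrableOn (fun x => weibullPDF α β γ x * Real.exp (-(b * (x - β) ^ γ))) (Ioi β) := by
  have hab : (0:ℝ) < α ^ (-γ) + b := by
    have := Real.rpow_pos_of_pos hα (-γ); linarith
  apply MeasureTheory.IntegrableOn.congr_fun
    ((key_integrable _ γ β hab hγ).const_mul (α ^ (-γ) / (α ^ (-γ) + b)))
    (fun x hx => (weib_point α β γ b x hα hγ hb hx).symm) measurableSet_Ioi

lemma weib_nonneg (α β γ : ℝ) (hα : 0 < α) (hγ : 0 < γ) (x : ℝ) : 0 ≤ weibullPDF α β γ x := by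
  unfold weibullPDF
  split
  · next h =>
    have h1 : (0:ℝ) ≤ ((x - β) / α) ^ (γ - 1) := Real.rpow_nonneg (div_nonneg (by linarith) hα.le) _
    positivity
  · exact le_refl _

lemma measurable_rpow_const (c : ℝ) : Measurable fun x : ℝ => x ^ c := by
  have h : (fun x : ℝ => x ^ c) = fun x =>
      if x = 0 then (if c = 0 then 1 else 0)
      else Real.exp (Real.log x * c) * (if x < 0 then Real.cos (c * Real.pi) else 1) := by
    funext x
    rcases lt_trichotomy x 0 with hx | hx | hx
    · rw [Real.rpow_def_of_neg hx, if_neg hx.ne, if_pos hx]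
    · subst hx
      rcases eq_or_ne c 0 with hc | hc
      · simp [hc]
      · simp [Real.zero_rpow hc, hc]
    · rw [Real.rpow_def_of_pos hx, if_neg hx.ne', if_neg (not_lt.mpr hx.le), mul_one]
  rw [h]
  refine Measurable.ite (by simpa using MeasurableSet.singleton (0:ℝ)) measurable_const ?_
  exact (Real.measurable_exp.comp (Real.measurable_log.mul_const c)).mul
    (Measurable.ite measurableSet_Iio measurable_const measurable_const)

lemma weib_meas (α β γ : ℝ) : Measurable (weibullPDF α β γ) := by
  unfold weibullPDF
  refine Measurable.ite measurableSet_Ici (Measurable.mul (Measurable.mul measurable_const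
    ?_) ?_) measurable_const
  · exact (measurable_rpow_const (γ-1)).comp ((measurable_id.sub_const β).div_const α)
  · exact Real.measurable_exp.comp
      ((measurable_rpow_const γ).comp ((measurable_id.sub_const β).div_const α)).neg

lemma weib_eq0 (α β γ x : ℝ) (hα : 0 < α) (hγ : 0 < γ) (hx : β < x) :
    weibullPDF α β γ x
      = α ^ (-γ) * γ * (x - β) ^ (γ - 1) * Real.exp (-(α ^ (-γ) * (x - β) ^ γ)) := by
  have ha : (0:ℝ) < α ^ (-γ) := Real.rpow_pos_of_pos hα _
  have h := weib_point α β γ 0 x hα hγ le_rfl hx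
  rw [zero_mul, neg_zero, Real.exp_zero, mul_one, add_zero, div_self ha.ne', one_mul] at h
  exact h

lemma weib_integrableOn (α β γ : ℝ) (hα : 0 < α) (hγ : 0 < γ) :
    IntegrableOn (weibullPDF α β γ) (Ioi β) := by
  have h := weib_exp_integrableOn α β γ 0 hα hγ le_rfl
  simpa using h

lemma weib_total (α β γ : ℝ) (hα : 0 < α) (hγ : 0 < γ) :
    ∫ x in Ioi β, weibullPDF α β γ x = 1 := by
  have ha : (0:ℝ) < α ^ (-γ) := Real.rpow_pos_of_pos hα _
  have h := weib_exp_integral α β γ 0 hα hγ le_rfl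
  rw [add_zero, div_self ha.ne'] at h
  simpa using h

lemma weib_tail (α β γ x₀ : ℝ) (hα : 0 < α) (hγ : 0 < γ) (hx₀ : β < x₀) :
    ∫ t in Ioi x₀, weibullPDF α β γ t = Real.exp (-(α ^ (-γ) * (x₀ - β) ^ γ)) := by
  have ha : (0:ℝ) < α ^ (-γ) := Real.rpow_pos_of_pos hα _
  have h := integral_Ioi_of_hasDerivAt_of_nonneg
    (g := fun t => -Real.exp (-(α ^ (-γ) * (t - β) ^ γ)))
    (a := x₀) (l := 0)
    ((aux_hasDerivAt (α ^ (-γ)) γ β hγ hx₀).continuousAt.continuousWithinAt)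
    (fun x hx => aux_hasDerivAt (α ^ (-γ)) γ β hγ (hx₀.trans hx.out))
    (fun x hx => by
      have h0 : (0:ℝ) ≤ (x - β) ^ (γ - 1) :=
        Real.rpow_nonneg (by have := hx₀.trans hx.out; linarith) _
      positivity)
    (aux_tendsto (α ^ (-γ)) γ β ha hγ)
  rw [setIntegral_congr_fun measurableSet_Ioi
    (fun t ht => weib_eq0 α β γ t hα hγ (hx₀.trans ht.out)), h]
  ring

lemma weib_measure_univ (α β γ : ℝ) (hα : 0 < α) (hγ : 0 < γ) :
    volume.withDensity (fun x => ENNReal.ofReal (weibullPDF α β γ x)) Set.univ = 1 := by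
  rw [withDensity_apply _ MeasurableSet.univ, Measure.restrict_univ]
  have hae : (fun x => ENNReal.ofReal (weibullPDF α β γ x))
      =ᵐ[volume] (Ioi β).indicator (fun x => ENNReal.ofReal (weibullPDF α β γ x)) := by
    have hβ : ∀ᵐ x : ℝ, x ≠ β := by
      rw [ae_iff]
      simpa using Real.volume_singleton (a := β)
    filter_upwards [hβ] with x hxβ
    rcases lt_or_gt_of_ne hxβ with h | h
    · have hnot : x ∉ Ioi β := not_lt.mpr h.le
      have h0 : ENNReal.ofReal (weibullPDF α β γ x) = 0 := by
        rw [weibullPDF, if_neg (not_le.mpr h), ENNReal.ofReal_zero]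
      exact h0.trans (Set.indicator_of_notMem hnot _).symm
    · exact (Set.indicator_of_mem (h : x ∈ Ioi β) (fun x => ENNReal.ofReal (weibullPDF α β γ x))).symm
  rw [lintegral_congr_ae hae, lintegral_indicator measurableSet_Ioi _,
    ← ofReal_integral_eq_lintegral_ofReal (weib_integrableOn α β γ hα hγ)
      (Filter.Eventually.of_forall fun x => weib_nonneg α β γ hα hγ x),
    weib_total α β γ hα hγ, ENNReal.ofReal_one]

lemma weib_measure_Iio (α β γ : ℝ) (hα : 0 < α) (hγ : 0 < γ) (x : ℝ) :
    volume.withDensity (fun t => ENNReal.ofReal (weibullPDF α β γ t)) (Iio x)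
      = ENNReal.ofReal
          (if β < x then 1 - Real.exp (-(α ^ (-γ) * (x - β) ^ γ)) else 0) := by
  by_cases hx : β < x
  · rw [if_pos hx]
    haveI : IsProbabilityMeasure
        (volume.withDensity (fun t => ENNReal.ofReal (weibullPDF α β γ t))) :=
      ⟨weib_measure_univ α β γ hα hγ⟩
    have hIci : volume.withDensity (fun t => ENNReal.ofReal (weibullPDF α β γ t)) (Ici x)
        = ENNReal.ofReal (Real.exp (-(α ^ (-γ) * (x - β) ^ γ))) := by
      rw [withDensity_apply _ measurableSet_Ici, ← restrict_Ioi_eq_restrict_Ici,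
        ← ofReal_integral_eq_lintegral_ofReal
          ((weib_integrableOn α β γ hα hγ).mono_set (Ioi_subset_Ioi hx.le))
          (Filter.Eventually.of_forall fun t => weib_nonneg α β γ hα hγ t),
        weib_tail α β γ x hα hγ hx]
    rw [show Iio x = (Ici x)ᶜ from compl_Ici.symm,
      prob_compl_eq_one_sub measurableSet_Ici, hIci,
      ENNReal.ofReal_sub _ (Real.exp_pos _).le, ENNReal.ofReal_one]
  · rw [if_neg hx, ENNReal.ofReal_zero, withDensity_apply _ measurableSet_Iio]
    rw [setLIntegral_congr_fun measurableSet_Iio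
      (fun t (ht : t < x) => by
        rw [weibullPDF, if_neg (by push_neg at hx; linarith), ENNReal.ofReal_zero])]
    simp

theorem pythagorean_single_weibull
    {Ω : Type*} [MeasureSpace Ω] [IsProbabilityMeasure (ℙ : Measure Ω)]
    (αS αA β γ : ℝ) (hαS : 0 < αS) (hαA : 0 < αA) (hγ : 0 < γ)
    (X Y : Ω → ℝ) (hX : Measurable X) (hY : Measurable Y)
    (hXd : Measure.map X ℙ =
      volume.withDensity (fun x => ENNReal.ofReal (weibullPDF αS β γ x)))
    (hYd : Measure.map Y ℙ =
      volume.withDensity (fun y => ENNReal.ofReal (weibullPDF αA β γ y)))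
    (hind : IndepFun X Y ℙ) :
    ℙ {ω | X ω > Y ω} = ENNReal.ofReal (αS ^ γ / (αS ^ γ + αA ^ γ)) := by
  have haSpos : 0 < αS ^ (-γ) := Real.rpow_pos_of_pos hαS _
  have haApos : 0 < αA ^ (-γ) := Real.rpow_pos_of_pos hαA _
  set F : ℝ → ℝ :=
    fun x => if β < x then 1 - Real.exp (-(αA ^ (-γ) * (x - β) ^ γ)) else 0 with hF
  have hFval : ∀ x, β < x → F x = 1 - Real.exp (-(αA ^ (-γ) * (x - β) ^ γ)) :=
    fun x hx => if_pos hx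
  have hFval' : ∀ x, ¬ β < x → F x = 0 := fun x hx => if_neg hx
  have hFnonneg : ∀ x, 0 ≤ F x := by
    intro x
    by_cases hx : β < x
    · rw [hFval x hx]
      have h1 : Real.exp (-(αA ^ (-γ) * (x - β) ^ γ)) ≤ 1 := by
        rw [Real.exp_le_one_iff]
        have h2 : (0:ℝ) ≤ (x - β) ^ γ := Real.rpow_nonneg (by linarith) _
        nlinarith
      linarith
    · rw [hFval' x hx]
  have hFmeas : Measurable F := by
    rw [hF]
    refine Measurable.ite measurableSet_Ioi ?_ measurable_const
    exact measurable_const.sub (Real.measurable_exp.comp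
      (((measurable_rpow_const γ).comp (measurable_id.sub_const β)).const_mul _).neg)
  haveI hprobA : IsProbabilityMeasure
      (volume.withDensity fun y => ENNReal.ofReal (weibullPDF αA β γ y)) :=
    ⟨weib_measure_univ αA β γ hαA hγ⟩
  have hjoint : Measure.map (fun ω => (X ω, Y ω)) ℙ
      = (volume.withDensity fun x => ENNReal.ofReal (weibullPDF αS β γ x)).prod
        (volume.withDensity fun y => ENNReal.ofReal (weibullPDF αA β γ y)) := by
    rw [← hXd, ← hYd]
    exact (indepFun_iff_map_prod_eq_prod_map_map hX.aemeasurable hY.aemeasurable).mp hind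
  have hset : MeasurableSet {p : ℝ × ℝ | p.2 < p.1} :=
    measurableSet_lt measurable_snd measurable_fst
  have h1 : ℙ {ω | X ω > Y ω}
      = Measure.map (fun ω => (X ω, Y ω)) ℙ {p : ℝ × ℝ | p.2 < p.1} := by
    rw [Measure.map_apply (hX.prodMk hY) hset]
    rfl
  rw [h1, hjoint, Measure.prod_apply hset]
  have h2 : ∀ x : ℝ,
      (volume.withDensity fun y => ENNReal.ofReal (weibullPDF αA β γ y))
        (Prod.mk x ⁻¹' {p : ℝ × ℝ | p.2 < p.1}) = ENNReal.ofReal (F x) := by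
    intro x
    have hpre : Prod.mk x ⁻¹' {p : ℝ × ℝ | p.2 < p.1} = Iio x := rfl
    rw [hpre, weib_measure_Iio αA β γ hαA hγ x]
  rw [lintegral_congr h2,
    lintegral_withDensity_eq_lintegral_mul volume (weib_meas αS β γ).ennreal_ofReal
      hFmeas.ennreal_ofReal]
  have h3 : ((fun x => ENNReal.ofReal (weibullPDF αS β γ x)) * fun x => ENNReal.ofReal (F x))
      = (Ioi β).indicator (fun x => ENNReal.ofReal (weibullPDF αS β γ x * F x)) := by
    funext x
    rw [Pi.mul_apply, ← ENNReal.ofReal_mul (weib_nonneg αS β γ hαS hγ x)]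
    by_cases hx : β < x
    · exact (Set.indicator_of_mem (hx : x ∈ Ioi β)
        (fun x => ENNReal.ofReal (weibullPDF αS β γ x * F x))).symm
    · rw [hFval' x hx, mul_zero, ENNReal.ofReal_zero]
      exact (Set.indicator_of_notMem (hx : x ∉ Ioi β)
        (fun x => ENNReal.ofReal (weibullPDF αS β γ x * F x))).symm
  rw [h3, lintegral_indicator measurableSet_Ioi _]
  have hIsub : IntegrableOn (fun x => weibullPDF αS β γ x * F x) (Ioi β) := by
    refine MeasureTheory.IntegrableOn.congr_fun
      ((weib_integrableOn αS β γ hαS hγ).sub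
        (weib_exp_integrableOn αS β γ (αA ^ (-γ)) hαS hγ haApos.le))
      (fun x hx => ?_) measurableSet_Ioi
    simp only [Pi.sub_apply]
    rw [hFval x hx]
    ring
  rw [← ofReal_integral_eq_lintegral_ofReal hIsub
    (Filter.Eventually.of_forall fun x =>
      mul_nonneg (weib_nonneg αS β γ hαS hγ x) (hFnonneg x))]
  have h4 : ∫ x in Ioi β, weibullPDF αS β γ x * F x
      = 1 - αS ^ (-γ) / (αS ^ (-γ) + αA ^ (-γ)) := by
    have heq : Set.EqOn (fun x => weibullPDF αS β γ x * F x)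
        (fun x => weibullPDF αS β γ x
          - weibullPDF αS β γ x * Real.exp (-(αA ^ (-γ) * (x - β) ^ γ))) (Ioi β) := by
      intro x hx
      simp only
      rw [hFval x hx]
      ring
    rw [setIntegral_congr_fun measurableSet_Ioi heq,
      integral_sub (weib_integrableOn αS β γ hαS hγ)
        (weib_exp_integrableOn αS β γ (αA ^ (-γ)) hαS hγ haApos.le),
      weib_total αS β γ hαS hγ, weib_exp_integral αS β γ (αA ^ (-γ)) hαS hγ haApos.le]
  rw [h4]
  congr 1
  rw [Real.rpow_neg hαS.le, Real.rpow_neg hαA.le]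
  have hA : 0 < αS ^ γ := Real.rpow_pos_of_pos hαS γ
  have hB : 0 < αA ^ γ := Real.rpow_pos_of_pos hαA γ
  have hsum : (αS ^ γ)⁻¹ + (αA ^ γ)⁻¹ = (αS ^ γ + αA ^ γ) / (αS ^ γ * αA ^ γ) := by
    field_simp
    ring
  rw [hsum]
  field_simp
  ring
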